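/- For every θ > 0 there is a constant C = max(θ, θ²) such that for all x > 0, Γ(x+θ)/Γ(x) = x^θ · exp(E(x)) with |E(x)| ≤ C/x. In particular, Γ(x+θ)/Γ(x) is asymptotic to x^θ as x → ∞. -/

import Mathlib

open Real Filter

/-- The error term. -/
noncomputable def Efun (θ : ℝ) : ℝ → ℝ := fun x =>
  Real.log (Real.Gamma (x + θ)) - Real.log (Real.Gamma x) - θ * Real.log x

lemma Efun_base {θ x : ℝ} (hθ0 : 0 < θ) (hθ1 : θ ≤ 1) (hx : 0 < x) :
    |Efun θ x| ≤ θ / x := by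
  have hΓx := Real.Gamma_pos_of_pos hx
  have hxθ : (0:ℝ) < x + θ := by linarith
  have cv := Real.convexOn_log_Gamma
  -- upper bound : log Γ (x+θ) ≤ (1-θ) log Γ x + θ log Γ (x+1)
  have h1 : Real.log (Real.Gamma (x + θ)) ≤
      (1 - θ) * Real.log (Real.Gamma x) + θ * Real.log (Real.Gamma (x + 1)) := by
    have := cv.2 (Set.mem_Ioi.mpr hx) (Set.mem_Ioi.mpr (by linarith : (0:ℝ) < x + 1))
      (by linarith : (0:ℝ) ≤ 1 - θ) hθ0.le (by ring)
    simpa [Function.comp, smul_eq_mul, show (1 - θ) * x + θ * (x + 1) = x + θ by ring] using this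
  -- lower bound : log Γ (x+1) ≤ θ log Γ (x+θ) + (1-θ) log Γ (x+θ+1)
  have h2 : Real.log (Real.Gamma (x + 1)) ≤
      θ * Real.log (Real.Gamma (x + θ)) + (1 - θ) * Real.log (Real.Gamma (x + θ + 1)) := by
    have := cv.2 (Set.mem_Ioi.mpr hxθ) (Set.mem_Ioi.mpr (by linarith : (0:ℝ) < x + θ + 1))
      hθ0.le (by linarith : (0:ℝ) ≤ 1 - θ) (by ring)
    simpa [Function.comp, smul_eq_mul, show θ * (x + θ) + (1 - θ) * (x + θ + 1) = x + 1 by ring]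
      using this
  have hG1 : Real.log (Real.Gamma (x + 1)) = Real.log x + Real.log (Real.Gamma x) := by
    rw [Real.Gamma_add_one hx.ne', Real.log_mul hx.ne' hΓx.ne']
  have hG2 : Real.log (Real.Gamma (x + θ + 1)) =
      Real.log (x + θ) + Real.log (Real.Gamma (x + θ)) := by
    rw [Real.Gamma_add_one hxθ.ne', Real.log_mul hxθ.ne' (Real.Gamma_pos_of_pos hxθ).ne']
  have hupper : Efun θ x ≤ 0 := by
    rw [hG1] at h1; unfold Efun; nlinarith
  have hlog : Real.log (x + θ) - Real.log x = Real.log (1 + θ / x) := by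
    rw [← Real.log_div hxθ.ne' hx.ne']
    congr 1; field_simp
  have hlog2 : Real.log (1 + θ / x) ≤ θ / x := by
    have := Real.log_le_sub_one_of_pos (by positivity : (0:ℝ) < 1 + θ / x)
    linarith
  have hlogpos : 0 ≤ Real.log (1 + θ / x) :=
    Real.log_nonneg (le_add_of_nonneg_right (by positivity))
  have hlower : -(θ / x) ≤ Efun θ x := by
    rw [hG1, hG2] at h2
    unfold Efun
    nlinarith [mul_nonneg (by linarith : (0:ℝ) ≤ 1 - θ) hlogpos,
      mul_le_mul_of_nonneg_left hlog2 (by linarith : (0:ℝ) ≤ 1 - θ),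
      hlog]
  rw [abs_le]; exact ⟨hlower, hupper.trans (by positivity)⟩

lemma Efun_rec {θ x : ℝ} (hθ : 1 < θ) (hx : 0 < x) :
    Efun θ x = Efun (θ - 1) x + Real.log (1 + (θ - 1) / x) := by
  have hxθ : (0:ℝ) < x + (θ - 1) := by linarith
  have h : Real.Gamma (x + θ) = (x + (θ - 1)) * Real.Gamma (x + (θ - 1)) := by
    rw [← Real.Gamma_add_one hxθ.ne']; ring_nf
  unfold Efun
  rw [h, Real.log_mul hxθ.ne' (Real.Gamma_pos_of_pos hxθ).ne']
  have : Real.log (1 + (θ - 1) / x) = Real.log (x + (θ - 1)) - Real.log x := by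
    rw [← Real.log_div hxθ.ne' hx.ne']; congr 1; field_simp
  rw [this]; ring

lemma Efun_bound : ∀ n : ℕ, ∀ θ : ℝ, 0 < θ → θ ≤ n + 1 → ∀ x : ℝ, 0 < x →
    |Efun θ x| ≤ max θ (θ ^ 2) / x := by
  intro n
  induction n with
  | zero =>
    intro θ hθ hθ1 x hx
    have h := Efun_base hθ (by simpa using hθ1) hx
    exact h.trans (by gcongr; exact le_max_left _ _)
  | succ n ih =>
    intro θ hθ hθ1 x hx
    by_cases hc : θ ≤ n + 1
    · exact ih θ hθ hc x hx
    · push_neg at hc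
      have hθ1' : 1 < θ := by
        have : (1:ℝ) ≤ n + 1 := by have := Nat.cast_nonneg (α := ℝ) n; linarith
        linarith
      have h1 := ih (θ - 1) (by linarith) (by push_cast; push_cast at hθ1; linarith) x hx
      rw [Efun_rec hθ1' hx]
      have hlog2 : |Real.log (1 + (θ - 1) / x)| ≤ (θ - 1) / x := by
        have hd : 0 ≤ (θ - 1) / x := div_nonneg (by linarith) hx.le
        rw [abs_of_nonneg (Real.log_nonneg (by linarith))]
        have := Real.log_le_sub_one_of_pos (by linarith : (0:ℝ) < 1 + (θ - 1) / x)
        linarith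
      calc |Efun (θ - 1) x + Real.log (1 + (θ - 1) / x)|
          ≤ |Efun (θ - 1) x| + |Real.log (1 + (θ - 1) / x)| := abs_add_le _ _
        _ ≤ max (θ - 1) ((θ - 1) ^ 2) / x + (θ - 1) / x := add_le_add h1 hlog2
        _ ≤ max θ (θ ^ 2) / x := by
            rw [← add_div, div_le_div_iff₀ hx hx]
            have h2 : max (θ - 1) ((θ - 1) ^ 2) ≤ (θ - 1) ^ 2 + (θ - 1) :=
              max_le (by nlinarith) (by nlinarith)
            have h3 : θ ^ 2 ≤ max θ (θ ^ 2) := le_max_right _ _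
            nlinarith

/-- For every `θ > 0` there is a constant `C = max(θ, θ²)` such that for all `x > 0`,
`Γ(x+θ)/Γ(x) = x^θ · exp(E(x))` with `|E(x)| ≤ C/x`.  In particular `Γ(x+θ)/Γ(x)` is
asymptotic to `x^θ` as `x → ∞`. -/
theorem gamma_ratio_asymptotic (θ : ℝ) (hθ : 0 < θ) :
    ∃ E : ℝ → ℝ,
      (∀ x, 0 < x →
        Real.Gamma (x + θ) / Real.Gamma x = x ^ θ * Real.exp (E x) ∧
          |E x| ≤ max θ (θ ^ 2) / x) ∧
      Filter.Tendsto (fun x => Real.Gamma (x + θ) / Real.Gamma x / x ^ θ)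
        Filter.atTop (nhds 1) := by
  refine ⟨Efun θ, ?_, ?_⟩
  · intro x hx
    have hΓx := Real.Gamma_pos_of_pos hx
    have hxθ : (0:ℝ) < x + θ := by linarith
    have hΓxθ := Real.Gamma_pos_of_pos hxθ
    have hrpow : x ^ θ = Real.exp (θ * Real.log x) := by
      rw [Real.rpow_def_of_pos hx, mul_comm]
    constructor
    · rw [hrpow, ← Real.exp_add]
      unfold Efun
      rw [show θ * Real.log x + (Real.log (Real.Gamma (x + θ)) - Real.log (Real.Gamma x)
          - θ * Real.log x) = Real.log (Real.Gamma (x + θ)) - Real.log (Real.Gamma x) by ring,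
        Real.exp_sub, Real.exp_log hΓxθ, Real.exp_log hΓx]
    · exact Efun_bound ⌈θ⌉₊ θ hθ ((Nat.le_ceil θ).trans (by push_cast; linarith)) x hx
  · have hE0 : Filter.Tendsto (Efun θ) Filter.atTop (nhds 0) := by
      apply squeeze_zero_norm' (a := fun x => max θ (θ ^ 2) / x)
      · filter_upwards [Filter.eventually_gt_atTop 0] with x hx
        exact Efun_bound ⌈θ⌉₊ θ hθ ((Nat.le_ceil θ).trans (by push_cast; linarith)) x hx
      · simpa using tendsto_const_nhds.div_atTop Filter.tendsto_id
    have : Filter.Tendsto (fun x => Real.exp (Efun θ x)) Filter.atTop (nhds 1) := by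
      simpa [Function.comp_def] using (Real.continuous_exp.tendsto 0).comp hE0
    refine this.congr' ?_
    filter_upwards [Filter.eventually_gt_atTop 0] with x hx
    have hΓx := Real.Gamma_pos_of_pos hx
    have hxθ : (0:ℝ) < x + θ := by linarith
    have hxp : (0:ℝ) < x ^ θ := Real.rpow_pos_of_pos hx θ
    have h : Real.Gamma (x + θ) / Real.Gamma x = x ^ θ * Real.exp (Efun θ x) := by
      rw [Real.rpow_def_of_pos hx, mul_comm (Real.log x) θ, ← Real.exp_add]
      unfold Efun
      rw [show θ * Real.log x + (Real.log (Real.Gamma (x + θ)) - Real.log (Real.Gamma x)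
          - θ * Real.log x) = Real.log (Real.Gamma (x + θ)) - Real.log (Real.Gamma x) by ring,
        Real.exp_sub, Real.exp_log (Real.Gamma_pos_of_pos hxθ), Real.exp_log hΓx]
    rw [h]; field_simp
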